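/- Let (X_T)_{T≥1} and (Y_T)_{T≥1} be families of ℝ^k-valued random vectors such that: (a) there is a constant D > 0 with |X_T| ≤ D almost surely for every T ≥ 1; (b) (√T Y_T)_{T≥1} is L^{∞−}-bounded; and (c) for every L > 0 there is C_L > 0 with P(X_T ≠ Y_T) ≤ C_L T^{−L} for all T ≥ 1. Then (√T X_T)_{T≥1} is L^{∞−}-bounded. (This transfer lemma yields the L^{∞−}-boundedness of the P-O estimator from that of the oracle estimator via the polynomial correct-selection bound.) -/

import Mathlib

open MeasureTheory
open scoped ENNReal

noncomputable section

/-- **Theorem (transfer of `L^{∞-}`-boundedness along a polynomially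
negligible exceptional event).** Let `(X_T)` and `(Y_T)` be families of
`ℝ^k`-valued random vectors such that (a) `|X_T| ≤ D` a.s. for all `T ≥ 1`,
(b) `(√T Y_T)` is `L^{∞-}`-bounded, and (c) for every `L > 0` there is
`C_L > 0` with `P(X_T ≠ Y_T) ≤ C_L T^{-L}` for all `T ≥ 1`. Then
`(√T X_T)` is `L^{∞-}`-bounded. -/
theorem transfer_Linfty_minus_bounded
    {Ω : Type} [MeasurableSpace Ω] (P : Measure Ω) [IsProbabilityMeasure P]
    (k : ℕ) (X Y : ℝ → Ω → EuclideanSpace ℝ (Fin k))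
    (hXmeas : ∀ T, Measurable (X T)) (hYmeas : ∀ T, Measurable (Y T))
    (D : ℝ) (hD : 0 < D)
    (hXbdd : ∀ T : ℝ, 1 ≤ T → ∀ᵐ ω ∂P, ‖X T ω‖ ≤ D)
    (hY : ∀ p : ℝ, 1 ≤ p → ∃ C : ℝ≥0∞, C < ⊤ ∧ ∀ T : ℝ, 1 ≤ T →
      ∫⁻ ω, ENNReal.ofReal (Real.sqrt T * ‖Y T ω‖) ^ p ∂P ≤ C)
    (hXY : ∀ L : ℝ, 0 < L → ∃ C : ℝ, 0 < C ∧ ∀ T : ℝ, 1 ≤ T →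
      P {ω | X T ω ≠ Y T ω} ≤ ENNReal.ofReal (C * T ^ (-L))) :
    ∀ p : ℝ, 1 ≤ p → ∃ C : ℝ≥0∞, C < ⊤ ∧ ∀ T : ℝ, 1 ≤ T →
      ∫⁻ ω, ENNReal.ofReal (Real.sqrt T * ‖X T ω‖) ^ p ∂P ≤ C := by
  intro p hp
  have hp0 : 0 < p := lt_of_lt_of_le one_pos hp
  obtain ⟨CY, hCY, hCYle⟩ := hY p hp
  obtain ⟨C, hC, hCle⟩ := hXY p hp0
  refine ⟨CY + ENNReal.ofReal D ^ p * ENNReal.ofReal C, ?_, ?_⟩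
  · have h1 : ENNReal.ofReal D ^ p < ⊤ :=
      ENNReal.rpow_lt_top_of_nonneg hp0.le ENNReal.ofReal_ne_top
    exact ENNReal.add_lt_top.2 ⟨hCY, ENNReal.mul_lt_top h1 ENNReal.ofReal_lt_top⟩
  · intro T hT
    have hT0 : (0:ℝ) ≤ T := le_trans zero_le_one hT
    set A := {ω | X T ω = Y T ω} with hAdef
    have hA : MeasurableSet A := measurableSet_eq_fun (hXmeas T) (hYmeas T)
    rw [← lintegral_add_compl _ hA]
    gcongr
    · -- on A, X = Y
      calc ∫⁻ ω in A, ENNReal.ofReal (Real.sqrt T * ‖X T ω‖) ^ p ∂P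
          = ∫⁻ ω in A, ENNReal.ofReal (Real.sqrt T * ‖Y T ω‖) ^ p ∂P := by
            refine setLIntegral_congr_fun hA ?_
            intro ω hω
            simp only [hAdef, Set.mem_setOf_eq] at hω
            simp only [hω]
        _ ≤ ∫⁻ ω, ENNReal.ofReal (Real.sqrt T * ‖Y T ω‖) ^ p ∂P :=
            setLIntegral_le_lintegral _ _
        _ ≤ CY := hCYle T hT
    · -- on Aᶜ
      have hbd : ∀ᵐ ω ∂P.restrict Aᶜ,
          ENNReal.ofReal (Real.sqrt T * ‖X T ω‖) ^ p
            ≤ ENNReal.ofReal (Real.sqrt T * D) ^ p := by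
        refine ae_restrict_of_ae ?_
        filter_upwards [hXbdd T hT] with ω hω
        gcongr
      calc ∫⁻ ω in Aᶜ, ENNReal.ofReal (Real.sqrt T * ‖X T ω‖) ^ p ∂P
          ≤ ∫⁻ _ in Aᶜ, ENNReal.ofReal (Real.sqrt T * D) ^ p ∂P :=
            lintegral_mono_ae hbd
        _ = ENNReal.ofReal (Real.sqrt T * D) ^ p * P Aᶜ := by
            rw [setLIntegral_const]
        _ ≤ ENNReal.ofReal (Real.sqrt T * D) ^ p * ENNReal.ofReal (C * T ^ (-p)) := by
            gcongr
            have : Aᶜ = {ω | X T ω ≠ Y T ω} := rfl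
            rw [this]
            exact hCle T hT
        _ ≤ ENNReal.ofReal D ^ p * ENNReal.ofReal C := by
            rw [ENNReal.ofReal_mul (Real.sqrt_nonneg T),
              ENNReal.mul_rpow_of_nonneg _ _ hp0.le]
            have hs : ENNReal.ofReal (Real.sqrt T) ^ p
                = ENNReal.ofReal (T ^ (p / 2)) := by
              rw [ENNReal.ofReal_rpow_of_nonneg (Real.sqrt_nonneg T) hp0.le]
              congr 1
              rw [Real.sqrt_eq_rpow, ← Real.rpow_mul hT0]
              ring_nf
            rw [hs, mul_comm (ENNReal.ofReal (T ^ (p / 2))),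
              mul_assoc, ← ENNReal.ofReal_mul (Real.rpow_nonneg hT0 _)]
            gcongr
            have : T ^ (p / 2) * (C * T ^ (-p)) = C * T ^ (p / 2 + (-p)) := by
              rw [Real.rpow_add (lt_of_lt_of_le one_pos hT)]; ring
            rw [this]
            nth_rewrite 2 [show C = C * 1 by ring]
            gcongr
            exact Real.rpow_le_one_of_one_le_of_nonpos hT (by linarith)
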